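/- Let p be a prime with p ≡ 1 (mod 6) and 4p = A² + 27B², A ≡ 1 (mod 3), B > 0. With the cosets ordered so that n₀₂ > n₀₁, the transition numbers satisfy n₁₂ = n₂₁ = (p+A+1)/9, n₀₂ = n₂₀ = n₁₁ = (2p - A + 9B - 4)/18, n₀₁ = n₁₀ = n₂₂ = (2p - A - 9B - 4)/18, and n₀₀ + n₁₁ + n₂₂ = (p-4)/3. -/

import Mathlib

set_option maxHeartbeats 2000000

/-- `Gcoset p g k` is the coset `G_k = {g^j : j ≡ k (mod 3)}` of the subgroup `G₀` of
cubic residues in `(ℤ/pℤ)*`, where `g` is a fixed generator of `(ℤ/pℤ)*`. -/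
def Gcoset (p : ℕ) (g : ZMod p) (k : ZMod 3) : Set (ZMod p) :=
  {x | ∃ j : ℕ, (j : ZMod 3) = k ∧ x = g ^ j}

/-- `transNum p g d i k` is the transition number `n_{ik}(d)`: the number of
`b ∈ {1,…,p-1}`, `b ≠ p-d`, with `b ∈ G_i` and `b+d ∈ G_k`. -/
noncomputable def transNum (p : ℕ) (g : ZMod p) (d : ℕ) (i k : ZMod 3) : ℕ :=
  Nat.card {b : ℕ // 1 ≤ b ∧ b ≤ p - 1 ∧ b ≠ p - d ∧
    (b : ZMod p) ∈ Gcoset p g i ∧ (b : ZMod p) + (d : ZMod p) ∈ Gcoset p g k}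

open Finset

/-- Uniqueness of the normalized representation `4p = A² + 27B²`. -/

lemma repUnique {p : ℕ} (hp : p.Prime) {A B A' B' : ℤ}
    (hA : A % 3 = 1) (hA' : A' % 3 = 1) (hB : 0 < B) (hB' : 0 < B')
    (h1 : 4 * (p : ℤ) = A ^ 2 + 27 * B ^ 2) (h2 : 4 * (p : ℤ) = A' ^ 2 + 27 * B' ^ 2) :
    A = A' ∧ B = B' := by
  have hP : Prime (p : ℤ) := Nat.prime_iff_prime_int.mp hp
  have hppos : (0 : ℤ) < p := by exact_mod_cast hp.pos
  have hdvd : (p : ℤ) ∣ (A * B' - A' * B) * (A * B' + A' * B) :=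
    ⟨4 * (B' ^ 2 - B ^ 2), by linear_combination (-B' ^ 2) * h1 + (B ^ 2) * h2⟩
  have hid1 : 16 * (p : ℤ) ^ 2 = (A * A' + 27 * B * B') ^ 2 + 27 * (A * B' - A' * B) ^ 2 := by
    linear_combination (4 * (p : ℤ)) * h1 + (A ^ 2 + 27 * B ^ 2) * h2
  have hid2 : 16 * (p : ℤ) ^ 2 = (A * A' - 27 * B * B') ^ 2 + 27 * (A * B' + A' * B) ^ 2 := by
    linear_combination (4 * (p : ℤ)) * h1 + (A ^ 2 + 27 * B ^ 2) * h2
  have key : ∀ u : ℤ, (p : ℤ) ∣ u → 27 * u ^ 2 ≤ 16 * (p : ℤ) ^ 2 → u = 0 := by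
    intro u hdu hub
    by_contra hu0
    have h1' : (p : ℤ) ≤ |u| := Int.le_of_dvd (abs_pos.mpr hu0) ((dvd_abs _ _).mpr hdu)
    have : (p : ℤ) ^ 2 ≤ u ^ 2 := by
      have := sq_abs u
      nlinarith [abs_nonneg u]
    nlinarith
  rcases hP.dvd_or_dvd hdvd with hu | hv
  · have hu0 : A * B' - A' * B = 0 := key _ hu (by nlinarith [sq_nonneg (A * A' + 27 * B * B')])
    have hBB : (B - B') * (B + B') = 0 := by
      have h4 : 4 * (p : ℤ) * B ^ 2 = 4 * (p : ℤ) * B' ^ 2 := by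
        linear_combination B ^ 2 * h2 - B' ^ 2 * h1 - (A * B' + A' * B) * hu0
      have : B ^ 2 = B' ^ 2 := by
        have h4p : (4 : ℤ) * p ≠ 0 := by positivity
        have h4 := mul_left_cancel₀ h4p h4
        nlinarith [h4]
      linear_combination this
    have hBeq : B = B' := by
      rcases mul_eq_zero.mp hBB with h | h
      · linarith
      · linarith
    refine ⟨?_, hBeq⟩
    have : A * B' = A' * B := by linarith [hu0]
    rw [hBeq] at this
    exact mul_right_cancel₀ (by linarith : B' ≠ 0) this
  · exfalso
    have hv0 : A * B' + A' * B = 0 := key _ hv (by nlinarith [sq_nonneg (A * A' - 27 * B * B')])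
    have hBB : (B - B') * (B + B') = 0 := by
      have h4 : 4 * (p : ℤ) * B ^ 2 = 4 * (p : ℤ) * B' ^ 2 := by
        linear_combination B ^ 2 * h2 - B' ^ 2 * h1 + (A' * B - A * B') * hv0
      have : B ^ 2 = B' ^ 2 := by nlinarith [h4]
      linear_combination this
    have hBeq : B = B' := by
      rcases mul_eq_zero.mp hBB with h | h
      · linarith
      · linarith
    have hAneg : A = -A' := by
      rw [hBeq] at hv0
      have : (A + A') * B' = 0 := by linarith [hv0]
      rcases mul_eq_zero.mp this with h | h
      · linarith
      · linarith
    omega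

theorem stmt_9 (p : ℕ) (hp : p.Prime) (hp6 : p % 6 = 1)
    (g : ZMod p) (hg : ∀ x : ZMod p, x ≠ 0 → ∃ j : ℕ, x = g ^ j)
    (A B : ℤ) (hA : A % 3 = 1) (hB : 0 < B) (hAB : 4 * (p : ℤ) = A ^ 2 + 27 * B ^ 2)
    (horder : transNum p g 1 0 2 > transNum p g 1 0 1) :
    9 * (transNum p g 1 1 2 : ℤ) = p + A + 1 ∧
    9 * (transNum p g 1 2 1 : ℤ) = p + A + 1 ∧
    18 * (transNum p g 1 0 2 : ℤ) = 2 * p - A + 9 * B - 4 ∧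
    18 * (transNum p g 1 2 0 : ℤ) = 2 * p - A + 9 * B - 4 ∧
    18 * (transNum p g 1 1 1 : ℤ) = 2 * p - A + 9 * B - 4 ∧
    18 * (transNum p g 1 0 1 : ℤ) = 2 * p - A - 9 * B - 4 ∧
    18 * (transNum p g 1 1 0 : ℤ) = 2 * p - A - 9 * B - 4 ∧
    18 * (transNum p g 1 2 2 : ℤ) = 2 * p - A - 9 * B - 4 ∧
    3 * ((transNum p g 1 0 0 : ℤ) + transNum p g 1 1 1 + transNum p g 1 2 2) = p - 4 := by
  classical
  have hp7 : 7 ≤ p := by have := hp.two_le; omega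
  haveI : Fact p.Prime := ⟨hp⟩
  haveI : NeZero p := ⟨by omega⟩
  have hζ : IsPrimitiveRoot (Complex.exp (2 * Real.pi * Complex.I / 3)) 3 := by
    simpa using Complex.isPrimitiveRoot_exp 3 (by norm_num)
  have hdvd3 : 3 ∣ Fintype.card (ZMod p) - 1 := by rw [ZMod.card]; omega
  obtain ⟨χ, hχord⟩ := MulChar.exists_mulChar_orderOf (ZMod p) (R := ℂ) hdvd3 hζ
  have hχ3 : χ ^ 3 = 1 := by rw [← hχord]; exact pow_orderOf_eq_one χ
  have hχ1 : χ ≠ 1 := by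
    intro h; rw [h, orderOf_one] at hχord; norm_num at hχord
  -- g ≠ 0
  have h2lt : (2 : ℕ) < p := by omega
  have h2ne0 : ((2 : ℕ) : ZMod p) ≠ 0 := by
    rw [Ne, ZMod.natCast_eq_zero_iff]
    intro h; have := Nat.le_of_dvd (by norm_num) h; omega
  have h2ne1 : ((2 : ℕ) : ZMod p) ≠ 1 := by
    intro h
    have hv := ZMod.val_cast_of_lt h2lt
    rw [h, ZMod.val_one] at hv
    · omega
  have hg0 : g ≠ 0 := by
    intro h0
    obtain ⟨j, hj⟩ := hg ((2 : ℕ) : ZMod p) h2ne0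
    rcases j with _ | j
    · rw [pow_zero] at hj; exact h2ne1 hj
    · rw [h0, zero_pow (Nat.succ_ne_zero j)] at hj; exact h2ne0 hj
  have hgu : IsUnit g := isUnit_iff_ne_zero.mpr hg0
  set ω := χ g with hωdef
  have hω3 : ω ^ 3 = 1 := by
    have h := MulChar.pow_apply' χ (by norm_num : (3 : ℕ) ≠ 0) g
    rw [hχ3, MulChar.one_apply hgu] at h
    exact h.symm
  have hω1 : ω ≠ 1 := by
    intro h
    apply hχ1
    apply MulChar.ext
    intro u
    obtain ⟨j, hj⟩ := hg u (Units.ne_zero u)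
    rw [MulChar.one_apply_coe, hj, map_pow, ← hωdef, h, one_pow]
  have hpow : ∀ j : ℕ, ω ^ j = ω ^ (j % 3) := by
    intro j
    conv_lhs => rw [← Nat.div_add_mod j 3]
    rw [pow_add, pow_mul, hω3, one_pow, one_mul]
  have hprim : IsPrimitiveRoot ω 3 := by
    refine ⟨hω3, fun l hl => ?_⟩
    rw [hpow] at hl
    have h3 : l % 3 < 3 := Nat.mod_lt _ (by norm_num)
    interval_cases h : l % 3
    · exact Nat.dvd_of_mod_eq_zero h
    · rw [pow_one] at hl; exact absurd hl hω1
    · exfalso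
      have h' := hω3
      rw [pow_succ, hl, one_mul] at h'
      exact hω1 h'
  have hquad : ω ^ 2 + ω + 1 = 0 := by
    have h0 : (ω - 1) * (ω ^ 2 + ω + 1) = 0 := by linear_combination hω3
    exact (mul_eq_zero.mp h0).resolve_left (sub_ne_zero.mpr hω1)
  have hLI : ∀ r s : ℤ, (r : ℂ) + (s : ℂ) * ω = 0 → r = 0 ∧ s = 0 := by
    have him : ω.im ≠ 0 := by
      intro h0
      have hre := congrArg Complex.re hquad
      simp only [Complex.add_re, Complex.one_re, Complex.zero_re, pow_two, Complex.mul_re, h0,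
        mul_zero, zero_mul, sub_zero, add_zero] at hre
      nlinarith [hre]
    intro r s h
    have h2 := congrArg Complex.im h
    simp only [Complex.add_im, Complex.mul_im, Complex.intCast_im, Complex.intCast_re,
      Complex.zero_im, zero_mul, add_zero, zero_add] at h2
    have hs : (s : ℝ) = 0 := by
      rcases mul_eq_zero.mp h2 with h' | h'
      · exact h'
      · exact absurd h' him
    have hs0 : s = 0 := by exact_mod_cast hs
    subst hs0
    refine ⟨?_, rfl⟩
    rw [Int.cast_zero, zero_mul, add_zero] at h
    exact_mod_cast h
  -- basic character values
  have hχ0 : χ 0 = 0 := χ.map_nonunit not_isUnit_zero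
  have hχm1 : χ (-1) = 1 := by
    have hm1sq : χ (-1) * χ (-1) = 1 := by
      rw [← map_mul, neg_mul_neg, one_mul, map_one]
    have hcube : χ (-1) ^ 3 = 1 := by
      have h := MulChar.pow_apply' χ (by norm_num : (3 : ℕ) ≠ 0) (-1 : ZMod p)
      rw [hχ3, MulChar.one_apply isUnit_one.neg] at h
      exact h.symm
    linear_combination hcube - (χ (-1)) * hm1sq
  have hχ2ne1 : χ ^ 2 ≠ 1 := by
    intro h
    apply hχ1
    have h3 := hχ3
    rw [pow_succ, h, one_mul] at h3
    exact h3
  have hχ2m1 : (χ ^ 2) (-1) = 1 := by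
    rw [MulChar.pow_apply' χ (by norm_num : (2 : ℕ) ≠ 0), hχm1, one_pow]
  have hcubex : ∀ x : ZMod p, x ≠ 0 → (χ x) ^ 3 = 1 := by
    intro x hx
    have h := MulChar.pow_apply' χ (by norm_num : (3 : ℕ) ≠ 0) x
    rw [hχ3, MulChar.one_apply (isUnit_iff_ne_zero.mpr hx)] at h
    exact h.symm
  -- coset membership vs character values
  have hmem1 : ∀ (x : ZMod p) (i : ZMod 3), x ∈ Gcoset p g i → χ x = ω ^ i.val := by
    rintro x i ⟨j, hj, rfl⟩
    have hval : i.val = j % 3 := by rw [← hj, ZMod.val_natCast]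
    rw [map_pow, ← hωdef, hpow j, hval]
  have hmem2 : ∀ (x : ZMod p) (i : ZMod 3), x ≠ 0 → χ x = ω ^ i.val → x ∈ Gcoset p g i := by
    intro x i hx0 hval
    obtain ⟨j, rfl⟩ := hg x hx0
    refine ⟨j, ?_, rfl⟩
    rw [map_pow, ← hωdef, hpow j] at hval
    have hiv : i.val < 3 := i.val_lt
    have hjm : j % 3 = i.val := hprim.pow_inj (Nat.mod_lt _ (by norm_num)) hiv hval
    have : ((j : ℕ) : ZMod 3) = ((j % 3 : ℕ) : ZMod 3) := by
      conv_lhs => rw [← Nat.mod_add_div j 3]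
      push_cast
      have h30 : (3 : ZMod 3) = 0 := by decide
      rw [h30, zero_mul, add_zero]
    rw [this, hjm, ZMod.natCast_rightInverse i]
  -- indicator function
  set T : ZMod 3 → ZMod p → ℂ := fun i x => 1 + χ x * (ω ^ i.val) ^ 2 + (χ x * (ω ^ i.val) ^ 2) ^ 2
    with hTdef
  have hcubeiv : ∀ i : ZMod 3, (ω ^ (i.val)) ^ 3 = 1 := by
    intro i
    rw [← pow_mul, mul_comm, pow_mul, hω3, one_pow]
  have hT3 : ∀ (i : ZMod 3) (x : ZMod p), x ≠ 0 → x ∈ Gcoset p g i → T i x = 3 := by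
    intro i x hx0 hxm
    have h1 : χ x * (ω ^ i.val) ^ 2 = 1 := by
      rw [hmem1 x i hxm, ← pow_mul, ← pow_add]
      rw [show i.val + i.val * 2 = 3 * i.val by ring, pow_mul, hω3, one_pow]
    simp only [hTdef, h1]
    norm_num
  have hT0 : ∀ (i : ZMod 3) (x : ZMod p), x ≠ 0 → x ∉ Gcoset p g i → T i x = 0 := by
    intro i x hx0 hxm
    set z := χ x * (ω ^ i.val) ^ 2 with hzdef
    have hz3 : z ^ 3 = 1 := by
      rw [hzdef, mul_pow, hcubex x hx0, one_mul, ← pow_mul, mul_comm 2 3, pow_mul,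
        hcubeiv i, one_pow]
    have hz1 : z ≠ 1 := by
      intro h
      apply hxm
      apply hmem2 x i hx0
      calc χ x = χ x * ((ω ^ i.val) ^ 2 * ω ^ i.val) := by
            rw [← pow_mul, ← pow_add, show i.val * 2 + i.val = 3 * i.val by ring,
              pow_mul, hω3, one_pow, mul_one]
        _ = z * ω ^ i.val := by rw [hzdef]; ring
        _ = ω ^ i.val := by rw [h, one_mul]
    have h0 : (z - 1) * (1 + z + z ^ 2) = 0 := by linear_combination hz3
    have h2 : 1 + z + z ^ 2 = 0 := (mul_eq_zero.mp h0).resolve_left (sub_ne_zero.mpr hz1)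
    simp only [hTdef]
    linear_combination h2
  -- the finite sets
  set S : ZMod 3 → ZMod 3 → Finset (ZMod p) := fun i k =>
    univ.filter (fun x => x ≠ 0 ∧ x ≠ -1 ∧ x ∈ Gcoset p g i ∧ x + 1 ∈ Gcoset p g k) with hSdef
  have hcount : ∀ i k : ZMod 3, transNum p g 1 i k = (S i k).card := by
    intro i k
    have he : {b : ℕ // 1 ≤ b ∧ b ≤ p - 1 ∧ b ≠ p - 1 ∧
        (b : ZMod p) ∈ Gcoset p g i ∧ (b : ZMod p) + ((1 : ℕ) : ZMod p) ∈ Gcoset p g k} ≃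
        {x : ZMod p // x ∈ S i k} := by
      refine ⟨fun b => ⟨(b.1 : ZMod p), ?_⟩, fun x => ⟨(x.1).val, ?_⟩, ?_, ?_⟩
      · obtain ⟨b, h1, h2, h3, h4, h5⟩ := b
        dsimp only
        have hb0 : (b : ZMod p) ≠ 0 := by
          rw [Ne, ZMod.natCast_eq_zero_iff]
          intro hdvd; have := Nat.le_of_dvd (by omega) hdvd; omega
        have hbm1 : (b : ZMod p) ≠ -1 := by
          intro h
          have hz : ((b + 1 : ℕ) : ZMod p) = 0 := by push_cast [h]; ring
          rw [ZMod.natCast_eq_zero_iff] at hz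
          have := Nat.le_of_dvd (by omega) hz; omega
        simp only [hSdef, Finset.mem_filter, Finset.mem_univ, true_and]
        refine ⟨hb0, hbm1, h4, ?_⟩
        rw [Nat.cast_one] at h5
        exact h5
      · obtain ⟨x, hx⟩ := x
        dsimp only
        simp only [hSdef, Finset.mem_filter, Finset.mem_univ, true_and] at hx
        obtain ⟨hx0, hxm1, h4, h5⟩ := hx
        have hvlt : x.val < p := ZMod.val_lt x
        have hcastv : ((x.val : ℕ) : ZMod p) = x := ZMod.natCast_rightInverse x
        have hv0 : x.val ≠ 0 := by
          intro h
          apply hx0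
          rw [← hcastv, h, Nat.cast_zero]
        have hvne : x.val ≠ p - 1 := by
          intro h
          apply hxm1
          rw [← hcastv, h]
          push_cast [Nat.cast_sub (by omega : 1 ≤ p)]
          simp [ZMod.natCast_self]
        refine ⟨by omega, by omega, hvne, ?_, ?_⟩
        · rw [hcastv]; exact h4
        · rw [hcastv, Nat.cast_one]; exact h5
      · rintro ⟨b, h1, h2, h3, h4, h5⟩
        apply Subtype.ext
        dsimp only
        exact ZMod.val_cast_of_lt (by omega)
      · rintro ⟨x, hx⟩
        apply Subtype.ext
        dsimp only
        exact ZMod.natCast_rightInverse x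
    simp only [transNum]
    rw [Nat.card_congr he, Nat.card_eq_fintype_card, Fintype.card_coe]
  -- the sum domain
  set s : Finset (ZMod p) := univ \ {0, -1} with hsdef
  have h0ne1 : (0 : ZMod p) ≠ -1 := by
    intro h
    have h' : (1 : ZMod p) = 0 := by linear_combination h
    exact one_ne_zero h'
  have hKey : ∀ i k : ZMod 3, ∑ x ∈ s, T i x * T k (x + 1) = 9 * ((S i k).card : ℂ) := by
    intro i k
    have hcong : ∀ x ∈ s, T i x * T k (x + 1) =
        if x ∈ Gcoset p g i ∧ x + 1 ∈ Gcoset p g k then (9 : ℂ) else 0 := by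
      intro x hx
      rw [hsdef, Finset.mem_sdiff, Finset.mem_insert, Finset.mem_singleton] at hx
      push_neg at hx
      obtain ⟨-, hx0, hxm1⟩ := hx
      have hx1 : x + 1 ≠ 0 := by
        intro h
        exact hxm1 (eq_neg_of_add_eq_zero_left h)
      by_cases h1 : x ∈ Gcoset p g i
      · by_cases h2 : x + 1 ∈ Gcoset p g k
        · rw [hT3 i x hx0 h1, hT3 k (x + 1) hx1 h2, if_pos ⟨h1, h2⟩]; norm_num
        · rw [hT0 k (x + 1) hx1 h2, if_neg (by tauto), mul_zero]
      · rw [hT0 i x hx0 h1, if_neg (by tauto), zero_mul]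
    have hfil : Finset.filter (fun x => x ∈ Gcoset p g i ∧ x + 1 ∈ Gcoset p g k) s = S i k := by
      ext x
      simp only [hSdef, hsdef, Finset.mem_filter, Finset.mem_sdiff, Finset.mem_univ, true_and,
        Finset.mem_insert, Finset.mem_singleton]
      tauto
    rw [Finset.sum_congr rfl hcong, Finset.sum_ite, Finset.sum_const, Finset.sum_const_zero,
      add_zero, nsmul_eq_mul, hfil, mul_comm]
  -- splitting sums over s
  have hsplit : ∀ f : ZMod p → ℂ, ∑ x ∈ s, f x = (∑ x, f x) - (f 0 + f (-1)) := by
    intro f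
    rw [hsdef, Finset.sum_sdiff_eq_sub (Finset.subset_univ _)]
    congr 1
    rw [Finset.sum_insert (by simpa using h0ne1), Finset.sum_singleton]
  -- sum of a nontrivial character over s
  have hχsum : ∀ ψ : MulChar (ZMod p) ℂ, ψ ≠ 1 → ψ (-1) = 1 → ∑ x ∈ s, ψ x = -1 := by
    intro ψ hψ hψm1
    rw [hsplit, MulChar.sum_eq_zero_of_ne_one hψ, ψ.map_nonunit not_isUnit_zero, hψm1]
    ring
  have hshift : ∀ ψ : MulChar (ZMod p) ℂ, ψ ≠ 1 → ∑ x ∈ s, ψ (x + 1) = -1 := by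
    intro ψ hψ
    rw [hsplit (fun x => ψ (x + 1))]
    have htot : ∑ x : ZMod p, ψ (x + 1) = ∑ x : ZMod p, ψ x :=
      Fintype.sum_equiv (Equiv.addRight (1 : ZMod p)) _ _ (fun x => rfl)
    rw [htot, MulChar.sum_eq_zero_of_ne_one hψ]
    simp only [zero_add, neg_add_cancel, map_one, ψ.map_nonunit not_isUnit_zero]
    ring
  have hcross : ∀ ψ₁ ψ₂ : MulChar (ZMod p) ℂ, ψ₁ (-1) = 1 →
      ∑ x ∈ s, ψ₁ x * ψ₂ (x + 1) = jacobiSum ψ₁ ψ₂ := by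
    intro ψ₁ ψ₂ hψ₁m1
    rw [hsplit (fun x => ψ₁ x * ψ₂ (x + 1))]
    have hz : ψ₁ 0 = 0 := ψ₁.map_nonunit not_isUnit_zero
    have hz2 : ψ₂ 0 = 0 := ψ₂.map_nonunit not_isUnit_zero
    have htot : ∑ x : ZMod p, ψ₁ x * ψ₂ (x + 1) = ∑ y : ZMod p, ψ₁ (-y) * ψ₂ (1 - y) := by
      refine Fintype.sum_equiv (Equiv.neg (ZMod p)) _ _ (fun x => ?_)
      simp only [Equiv.neg_apply, neg_neg]
      ring_nf
    have hneg : ∀ y : ZMod p, ψ₁ (-y) = ψ₁ y := by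
      intro y
      rw [show -y = -1 * y by ring, map_mul, hψ₁m1, one_mul]
    rw [htot]
    simp only [hneg]
    rw [jacobiSum]
    simp only [hz, hz2, zero_mul, mul_zero, zero_add, neg_add_cancel]
    ring_nf
  -- Jacobi sums
  set J := jacobiSum χ χ with hJdef
  set J2 := jacobiSum (χ ^ 2) (χ ^ 2) with hJ2def
  have hinv : χ ^ 2 = χ⁻¹ := by
    apply eq_inv_of_mul_eq_one_left
    rw [← pow_succ]
    exact hχ3
  have hJ12 : jacobiSum χ (χ ^ 2) = -1 := by
    rw [hinv, jacobiSum_nontrivial_inv hχ1, hχm1]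
  have hJ21 : jacobiSum (χ ^ 2) χ = -1 := by rw [jacobiSum_comm]; exact hJ12
  have hJmul : J * J2 = (p : ℂ) := by
    have hchar : ringChar ℂ ≠ ringChar (ZMod p) := by
      rw [ringChar.eq ℂ 0, ZMod.ringChar_zmod_n]
      omega
    have hne2 : χ * χ ≠ 1 := by rwa [← pow_two]
    have h := jacobiSum_mul_jacobiSum_inv hchar hχ1 hχ1 hne2
    rw [← hinv] at h
    rw [hJdef, hJ2def, h, ZMod.card]
  -- the master formula
  have hmaster : ∀ i k : ZMod 3, 9 * ((S i k).card : ℂ) =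
      (p : ℂ) - 2 - (ω ^ i.val) ^ 2 - (ω ^ i.val) ^ 4 - (ω ^ k.val) ^ 2 - (ω ^ k.val) ^ 4
        - (ω ^ i.val) ^ 2 * (ω ^ k.val) ^ 4 - (ω ^ i.val) ^ 4 * (ω ^ k.val) ^ 2
        + (ω ^ i.val) ^ 2 * (ω ^ k.val) ^ 2 * J + (ω ^ i.val) ^ 4 * (ω ^ k.val) ^ 4 * J2 := by
    intro i k
    rw [← hKey i k]
    have hexp : ∀ x ∈ s, T i x * T k (x + 1) =
        1 + (ω ^ i.val) ^ 2 * χ x + (ω ^ i.val) ^ 4 * ((χ ^ 2) x)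
          + (ω ^ k.val) ^ 2 * χ (x + 1) + (ω ^ k.val) ^ 4 * ((χ ^ 2) (x + 1))
          + (ω ^ i.val) ^ 2 * (ω ^ k.val) ^ 2 * (χ x * χ (x + 1))
          + (ω ^ i.val) ^ 2 * (ω ^ k.val) ^ 4 * (χ x * ((χ ^ 2) (x + 1)))
          + (ω ^ i.val) ^ 4 * (ω ^ k.val) ^ 2 * (((χ ^ 2) x) * χ (x + 1))
          + (ω ^ i.val) ^ 4 * (ω ^ k.val) ^ 4 * (((χ ^ 2) x) * ((χ ^ 2) (x + 1))) := by
      intro x _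
      simp only [hTdef, MulChar.pow_apply' χ (by norm_num : (2 : ℕ) ≠ 0)]
      ring
    rw [Finset.sum_congr rfl hexp]
    simp only [Finset.sum_add_distrib, ← Finset.mul_sum]
    rw [Finset.sum_const, hχsum χ hχ1 hχm1, hχsum (χ ^ 2) hχ2ne1 hχ2m1,
      hshift χ hχ1, hshift (χ ^ 2) hχ2ne1,
      hcross χ χ hχm1, hcross χ (χ ^ 2) hχm1, hcross (χ ^ 2) χ hχ2m1,
      hcross (χ ^ 2) (χ ^ 2) hχ2m1, hJ12, hJ21, ← hJdef, ← hJ2def]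
    have hcards : s.card = p - 2 := by
      rw [hsdef, Finset.card_sdiff_of_subset (Finset.subset_univ _), Finset.card_univ, ZMod.card]
      rw [Finset.card_insert_of_notMem (by simpa using h0ne1), Finset.card_singleton]
    rw [hcards]
    have : ((p - 2 : ℕ) : ℂ) = (p : ℂ) - 2 := by
      push_cast [Nat.cast_sub (by omega : 2 ≤ p)]
      ring
    rw [nsmul_eq_mul, this]
    ring
  -- elements of ℤ[ω]
  have hadj : ∀ z ∈ Algebra.adjoin ℤ {ω}, ∃ a b : ℤ, z = (a : ℂ) + (b : ℂ) * ω := by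
    intro z hz
    induction hz using Algebra.adjoin_induction with
    | mem x hx =>
      rw [Set.mem_singleton_iff] at hx
      exact ⟨0, 1, by rw [hx]; push_cast; ring⟩
    | algebraMap r => exact ⟨r, 0, by push_cast; simp [Algebra.algebraMap_eq_smul_one]⟩
    | add x y hx hy ihx ihy =>
      obtain ⟨a1, b1, rfl⟩ := ihx
      obtain ⟨a2, b2, rfl⟩ := ihy
      exact ⟨a1 + a2, b1 + b2, by push_cast; ring⟩
    | mul x y hx hy ihx ihy =>
      obtain ⟨a1, b1, rfl⟩ := ihx
      obtain ⟨a2, b2, rfl⟩ := ihy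
      refine ⟨a1 * a2 - b1 * b2, a1 * b2 + a2 * b1 - b1 * b2, ?_⟩
      push_cast
      linear_combination ((b1 : ℂ) * b2) * hquad
  have hχ2pow : (χ ^ 2) ^ 3 = 1 := by
    rw [← pow_mul, mul_comm, pow_mul, hχ3, one_pow]
  obtain ⟨a, b, hJab⟩ := hadj J (jacobiSum_mem_algebraAdjoin_of_pow_eq_one hχ3 hχ3 hprim)
  obtain ⟨a', b', hJ2ab⟩ := hadj J2
    (jacobiSum_mem_algebraAdjoin_of_pow_eq_one hχ2pow hχ2pow hprim)
  -- congruence J ≡ -1 mod 3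
  obtain ⟨z, hzmem, hzeq⟩ := exists_jacobiSum_eq_neg_one_add (by norm_num : (2 : ℕ) < 3)
    hχ3 hχ3 hdvd3 hprim
  obtain ⟨cz, dz, hz⟩ := hadj z hzmem
  have EC : a - (3 * dz - 1) = 0 ∧ b - (3 * dz - 3 * cz) = 0 := by
    apply hLI
    push_cast
    linear_combination hzeq - hJab + (ω - 1) ^ 2 * hz +
      (-3 * (dz : ℂ) + (cz : ℂ) + (dz : ℂ) * ω) * hquad
  have EJ : a * a' - b * b' - (p : ℤ) = 0 ∧ a * b' + a' * b - b * b' = 0 := by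
    apply hLI
    push_cast
    linear_combination hJmul - J2 * hJab - ((a : ℂ) + (b : ℂ) * ω) * hJ2ab +
      (-(b : ℂ) * (b' : ℂ)) * hquad
  have hv0 : (0 : ZMod 3).val = 0 := by decide
  have hv1 : (1 : ZMod 3).val = 1 := by decide
  have hv2 : (2 : ZMod 3).val = 2 := by decide
  have E00 : 9 * ((S 0 0).card : ℤ) - ((-8) + (1)*(p:ℤ) + (1)*a' + (1)*a) = 0 ∧ -((1)*b' + (1)*b) = 0 := by
    apply hLI
    have hm := hmaster 0 0
    simp only [hv0, hv1, hv2] at hm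
    push_cast
    linear_combination hm + (ω^0 : ℂ) * hJab + (ω^0 : ℂ) * hJ2ab + ((0:ℂ)) * hquad
  have E01 : 9 * ((S 0 1).card : ℤ) - ((-2) + (1)*(p:ℤ) + (-1)*b' + (1)*b + (-1)*a) = 0 ∧ -((-1)*b' + (1)*a' + (-1)*a) = 0 := by
    apply hLI
    have hm := hmaster 0 1
    simp only [hv0, hv1, hv2] at hm
    push_cast
    linear_combination hm + (ω^2 : ℂ) * hJab + (ω^4 : ℂ) * hJ2ab + ((-2) + (1)*(b':ℂ) + (-1)*(b:ℂ) + (1)*(a:ℂ) + (2)*ω + (-1)*(a':ℂ)*ω + (1)*(b:ℂ)*ω + (-2)*ω^2 + (-1)*(b':ℂ)*ω^2 + (1)*(a':ℂ)*ω^2 + (1)*(b':ℂ)*ω^3) * hquad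
  have E02 : 9 * ((S 0 2).card : ℤ) - ((-2) + (1)*(p:ℤ) + (1)*b' + (-1)*a' + (-1)*b) = 0 ∧ -((-1)*a' + (-1)*b + (1)*a) = 0 := by
    apply hLI
    have hm := hmaster 0 2
    simp only [hv0, hv1, hv2] at hm
    push_cast
    linear_combination hm + (ω^4 : ℂ) * hJab + (ω^8 : ℂ) * hJ2ab + ((-2) + (-1)*(b':ℂ) + (1)*(a':ℂ) + (1)*(b:ℂ) + (2)*ω + (1)*(b':ℂ)*ω + (-1)*(a:ℂ)*ω + (-1)*(a':ℂ)*ω^2 + (-1)*(b:ℂ)*ω^2 + (1)*(a:ℂ)*ω^2 + (-2)*ω^3 + (-1)*(b':ℂ)*ω^3 + (1)*(a':ℂ)*ω^3 + (1)*(b:ℂ)*ω^3 + (1)*(b':ℂ)*ω^4 + (2)*ω^5 + (-1)*(a':ℂ)*ω^5 + (-2)*ω^6 + (-1)*(b':ℂ)*ω^6 + (1)*(a':ℂ)*ω^6 + (1)*(b':ℂ)*ω^7) * hquad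
  have E10 : 9 * ((S 1 0).card : ℤ) - ((-2) + (1)*(p:ℤ) + (-1)*b' + (1)*b + (-1)*a) = 0 ∧ -((-1)*b' + (1)*a' + (-1)*a) = 0 := by
    apply hLI
    have hm := hmaster 1 0
    simp only [hv0, hv1, hv2] at hm
    push_cast
    linear_combination hm + (ω^2 : ℂ) * hJab + (ω^4 : ℂ) * hJ2ab + ((-2) + (1)*(b':ℂ) + (-1)*(b:ℂ) + (1)*(a:ℂ) + (2)*ω + (-1)*(a':ℂ)*ω + (1)*(b:ℂ)*ω + (-2)*ω^2 + (-1)*(b':ℂ)*ω^2 + (1)*(a':ℂ)*ω^2 + (1)*(b':ℂ)*ω^3) * hquad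
  have E11 : 9 * ((S 1 1).card : ℤ) - ((-2) + (1)*(p:ℤ) + (1)*b' + (-1)*a' + (-1)*b) = 0 ∧ -((-1)*a' + (-1)*b + (1)*a) = 0 := by
    apply hLI
    have hm := hmaster 1 1
    simp only [hv0, hv1, hv2] at hm
    push_cast
    linear_combination hm + (ω^4 : ℂ) * hJab + (ω^8 : ℂ) * hJ2ab + ((-1)*(b':ℂ) + (1)*(a':ℂ) + (1)*(b:ℂ) + (1)*(b':ℂ)*ω + (-1)*(a:ℂ)*ω + (-2)*ω^2 + (-1)*(a':ℂ)*ω^2 + (-1)*(b:ℂ)*ω^2 + (1)*(a:ℂ)*ω^2 + (2)*ω^3 + (-1)*(b':ℂ)*ω^3 + (1)*(a':ℂ)*ω^3 + (1)*(b:ℂ)*ω^3 + (-2)*ω^4 + (1)*(b':ℂ)*ω^4 + (-1)*(a':ℂ)*ω^5 + (-1)*(b':ℂ)*ω^6 + (1)*(a':ℂ)*ω^6 + (1)*(b':ℂ)*ω^7) * hquad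
  have E12 : 9 * ((S 1 2).card : ℤ) - ((1) + (1)*(p:ℤ) + (1)*a' + (1)*a) = 0 ∧ -((1)*b' + (1)*b) = 0 := by
    apply hLI
    have hm := hmaster 1 2
    simp only [hv0, hv1, hv2] at hm
    push_cast
    linear_combination hm + (ω^6 : ℂ) * hJab + (ω^12 : ℂ) * hJ2ab + ((-3) + (-1)*(a':ℂ) + (-1)*(a:ℂ) + (3)*ω + (-1)*(b':ℂ)*ω + (1)*(a':ℂ)*ω + (-1)*(b:ℂ)*ω + (1)*(a:ℂ)*ω + (-1)*ω^2 + (1)*(b':ℂ)*ω^2 + (1)*(b:ℂ)*ω^2 + (-2)*ω^3 + (-1)*(a':ℂ)*ω^3 + (-1)*(a:ℂ)*ω^3 + (1)*ω^4 + (-1)*(b':ℂ)*ω^4 + (1)*(a':ℂ)*ω^4 + (-1)*(b:ℂ)*ω^4 + (1)*(a:ℂ)*ω^4 + (1)*ω^5 + (1)*(b':ℂ)*ω^5 + (1)*(b:ℂ)*ω^5 + (-2)*ω^6 + (-1)*(a':ℂ)*ω^6 + (1)*ω^7 + (-1)*(b':ℂ)*ω^7 + (1)*(a':ℂ)*ω^7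 + (-1)*ω^8 + (1)*(b':ℂ)*ω^8 + (-1)*(a':ℂ)*ω^9 + (-1)*(b':ℂ)*ω^10 + (1)*(a':ℂ)*ω^10 + (1)*(b':ℂ)*ω^11) * hquad
  have E20 : 9 * ((S 2 0).card : ℤ) - ((-2) + (1)*(p:ℤ) + (1)*b' + (-1)*a' + (-1)*b) = 0 ∧ -((-1)*a' + (-1)*b + (1)*a) = 0 := by
    apply hLI
    have hm := hmaster 2 0
    simp only [hv0, hv1, hv2] at hm
    push_cast
    linear_combination hm + (ω^4 : ℂ) * hJab + (ω^8 : ℂ) * hJ2ab + ((-2) + (-1)*(b':ℂ) + (1)*(a':ℂ) + (1)*(b:ℂ) + (2)*ω + (1)*(b':ℂ)*ω + (-1)*(a:ℂ)*ω + (-1)*(a':ℂ)*ω^2 + (-1)*(b:ℂ)*ω^2 + (1)*(a:ℂ)*ω^2 + (-2)*ω^3 + (-1)*(b':ℂ)*ω^3 + (1)*(a':ℂ)*ω^3 + (1)*(b:ℂ)*ω^3 + (1)*(b':ℂ)*ω^4 + (2)*ω^5 + (-1)*(a':ℂ)*ω^5 + (-2)*ω^6 + (-1)*(b':ℂ)*ω^6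 + (1)*(a':ℂ)*ω^6 + (1)*(b':ℂ)*ω^7) * hquad
  have E21 : 9 * ((S 2 1).card : ℤ) - ((1) + (1)*(p:ℤ) + (1)*a' + (1)*a) = 0 ∧ -((1)*b' + (1)*b) = 0 := by
    apply hLI
    have hm := hmaster 2 1
    simp only [hv0, hv1, hv2] at hm
    push_cast
    linear_combination hm + (ω^6 : ℂ) * hJab + (ω^12 : ℂ) * hJ2ab + ((-3) + (-1)*(a':ℂ) + (-1)*(a:ℂ) + (3)*ω + (-1)*(b':ℂ)*ω + (1)*(a':ℂ)*ω + (-1)*(b:ℂ)*ω + (1)*(a:ℂ)*ω + (-1)*ω^2 + (1)*(b':ℂ)*ω^2 + (1)*(b:ℂ)*ω^2 + (-2)*ω^3 + (-1)*(a':ℂ)*ω^3 + (-1)*(a:ℂ)*ω^3 + (1)*ω^4 + (-1)*(b':ℂ)*ω^4 + (1)*(a':ℂ)*ω^4 + (-1)*(b:ℂ)*ω^4 + (1)*(a:ℂ)*ω^4 + (1)*ω^5 + (1)*(b':ℂ)*ω^5 + (1)*(b:ℂ)*ω^5 + (-2)*ω^6 + (-1)*(a':ℂ)*ω^6 + (1)*ω^7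 + (-1)*(b':ℂ)*ω^7 + (1)*(a':ℂ)*ω^7 + (-1)*ω^8 + (1)*(b':ℂ)*ω^8 + (-1)*(a':ℂ)*ω^9 + (-1)*(b':ℂ)*ω^10 + (1)*(a':ℂ)*ω^10 + (1)*(b':ℂ)*ω^11) * hquad
  have E22 : 9 * ((S 2 2).card : ℤ) - ((-2) + (1)*(p:ℤ) + (-1)*b' + (1)*b + (-1)*a) = 0 ∧ -((-1)*b' + (1)*a' + (-1)*a) = 0 := by
    apply hLI
    have hm := hmaster 2 2
    simp only [hv0, hv1, hv2] at hm
    push_cast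
    linear_combination hm + (ω^8 : ℂ) * hJab + (ω^16 : ℂ) * hJ2ab + ((1)*(b':ℂ) + (-1)*(b:ℂ) + (1)*(a:ℂ) + (-1)*(a':ℂ)*ω + (1)*(b:ℂ)*ω + (-1)*(b':ℂ)*ω^2 + (1)*(a':ℂ)*ω^2 + (-1)*(a:ℂ)*ω^2 + (1)*(b':ℂ)*ω^3 + (-1)*(b:ℂ)*ω^3 + (1)*(a:ℂ)*ω^3 + (-2)*ω^4 + (-1)*(a':ℂ)*ω^4 + (1)*(b:ℂ)*ω^4 + (2)*ω^5 + (-1)*(b':ℂ)*ω^5 + (1)*(a':ℂ)*ω^5 + (-1)*(a:ℂ)*ω^5 + (1)*(b':ℂ)*ω^6 + (-1)*(b:ℂ)*ω^6 + (1)*(a:ℂ)*ω^6 + (-2)*ω^7 + (-1)*(a':ℂ)*ω^7 + (1)*(b:ℂ)*ω^7 + (-1)*(b':ℂ)*ω^8 + (1)*(a':ℂ)*ω^8 + (2)*ω^9 + (1)*(b':ℂ)*ω^9 + (-2)*ω^10 + (-1)*(a':ℂ)*ω^10 + (-1)*(b':ℂ)*ω^11 + (1)*(a':ℂ)*ω^11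 + (1)*(b':ℂ)*ω^12 + (-1)*(a':ℂ)*ω^13 + (-1)*(b':ℂ)*ω^14 + (1)*(a':ℂ)*ω^14 + (1)*(b':ℂ)*ω^15) * hquad
  -- translate the ordering hypothesis
  rw [hcount 0 2, hcount 0 1] at horder
  -- integer bookkeeping
  have hb' : b' = -b := by omega
  have ha' : a' = a - b := by omega
  subst ha'
  subst hb'
  have hPquad : 4 * (p : ℤ) = (2 * a - b) ^ 2 + 27 * (cz - dz) ^ 2 := by
    linear_combination (-4 : ℤ) * EJ.1 + (3 * (b - 3 * cz + 3 * dz)) * EC.2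
  have hL3 : (2 * a - b) % 3 = 1 := by omega
  have hbneg : b < 0 := by omega
  obtain ⟨hAeq, hBeq⟩ := repUnique hp hA hL3 hB (by omega : (0 : ℤ) < cz - dz) hAB hPquad
  refine ⟨?_, ?_, ?_, ?_, ?_, ?_, ?_, ?_, ?_⟩
  · rw [hcount 1 2]; omega
  · rw [hcount 2 1]; omega
  · rw [hcount 0 2]; omega
  · rw [hcount 2 0]; omega
  · rw [hcount 1 1]; omega
  · rw [hcount 0 1]; omega
  · rw [hcount 1 0]; omega
  · rw [hcount 2 2]; omega
  · rw [hcount 0 0, hcount 1 1, hcount 2 2]; omega
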